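/- For any permutation σ of [n], the number of inversions satisfies inv(σ) = cval(σ) + cdrise(σ) + cdfall(σ) + ucross(σ) + lcross(σ) + 2(unest(σ) + lnest(σ) + psnest(σ)). -/

import Mathlib

open Finset

def fixCt {n : ℕ} (σ : Equiv.Perm (Fin n)) : ℕ :=
  (univ.filter fun i => σ i = i).card

def cpeakCt {n : ℕ} (σ : Equiv.Perm (Fin n)) : ℕ :=
  (univ.filter fun i => σ⁻¹ i < i ∧ σ i < i).card

def cvalCt {n : ℕ} (σ : Equiv.Perm (Fin n)) : ℕ :=
  (univ.filter fun i => i < σ⁻¹ i ∧ i < σ i).card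

def cdriseCt {n : ℕ} (σ : Equiv.Perm (Fin n)) : ℕ :=
  (univ.filter fun i => σ⁻¹ i < i ∧ i < σ i).card

def cdfallCt {n : ℕ} (σ : Equiv.Perm (Fin n)) : ℕ :=
  (univ.filter fun i => i < σ⁻¹ i ∧ σ i < i).card

def ucrossCt {n : ℕ} (σ : Equiv.Perm (Fin n)) : ℕ :=
  (univ.filter fun p : Fin n × Fin n × Fin n × Fin n =>
    p.1 < p.2.1 ∧ p.2.1 < p.2.2.1 ∧ p.2.2.1 < p.2.2.2 ∧
    p.2.2.1 = σ p.1 ∧ p.2.2.2 = σ p.2.1).card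

def lcrossCt {n : ℕ} (σ : Equiv.Perm (Fin n)) : ℕ :=
  (univ.filter fun p : Fin n × Fin n × Fin n × Fin n =>
    p.1 < p.2.1 ∧ p.2.1 < p.2.2.1 ∧ p.2.2.1 < p.2.2.2 ∧
    p.1 = σ p.2.2.1 ∧ p.2.1 = σ p.2.2.2).card

def unestCt {n : ℕ} (σ : Equiv.Perm (Fin n)) : ℕ :=
  (univ.filter fun p : Fin n × Fin n × Fin n × Fin n =>
    p.1 < p.2.1 ∧ p.2.1 < p.2.2.1 ∧ p.2.2.1 < p.2.2.2 ∧
    p.2.2.2 = σ p.1 ∧ p.2.2.1 = σ p.2.1).card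

def lnestCt {n : ℕ} (σ : Equiv.Perm (Fin n)) : ℕ :=
  (univ.filter fun p : Fin n × Fin n × Fin n × Fin n =>
    p.1 < p.2.1 ∧ p.2.1 < p.2.2.1 ∧ p.2.2.1 < p.2.2.2 ∧
    p.1 = σ p.2.2.2 ∧ p.2.1 = σ p.2.2.1).card

def psnestCt {n : ℕ} (σ : Equiv.Perm (Fin n)) : ℕ :=
  (univ.filter fun p : Fin n × Fin n × Fin n =>
    p.1 < p.2.1 ∧ p.2.1 < p.2.2 ∧ σ p.2.1 = p.2.1 ∧ σ p.1 = p.2.2).card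

def invCt {n : ℕ} (σ : Equiv.Perm (Fin n)) : ℕ :=
  (univ.filter fun p : Fin n × Fin n => p.1 < p.2 ∧ σ p.2 < σ p.1).card

/-- Number of cycles of a permutation, counting fixed points as cycles. -/
def cycCt {n : ℕ} (σ : Equiv.Perm (Fin n)) : ℕ :=
  σ.cycleType.card + fixCt σ

def ucrossAt {n : ℕ} (σ : Equiv.Perm (Fin n)) (j : Fin n) : ℕ :=
  (univ.filter fun p : Fin n × Fin n × Fin n =>
    p.1 < j ∧ j < p.2.1 ∧ p.2.1 < p.2.2 ∧ p.2.1 = σ p.1 ∧ p.2.2 = σ j).card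

def unestAt {n : ℕ} (σ : Equiv.Perm (Fin n)) (j : Fin n) : ℕ :=
  (univ.filter fun p : Fin n × Fin n × Fin n =>
    p.1 < j ∧ j < p.2.1 ∧ p.2.1 < p.2.2 ∧ p.2.1 = σ j ∧ p.2.2 = σ p.1).card

def lcrossAt {n : ℕ} (σ : Equiv.Perm (Fin n)) (k : Fin n) : ℕ :=
  (univ.filter fun p : Fin n × Fin n × Fin n =>
    p.1 < p.2.1 ∧ p.2.1 < k ∧ k < p.2.2 ∧ p.1 = σ k ∧ p.2.1 = σ p.2.2).card

def lnestAt {n : ℕ} (σ : Equiv.Perm (Fin n)) (k : Fin n) : ℕ :=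
  (univ.filter fun p : Fin n × Fin n × Fin n =>
    p.1 < p.2.1 ∧ p.2.1 < k ∧ k < p.2.2 ∧ p.1 = σ p.2.2 ∧ p.2.1 = σ k).card

/-- `i` is a record (left-to-right maximum) of `σ`. -/
def IsRecord {n : ℕ} (σ : Equiv.Perm (Fin n)) (i : Fin n) : Prop :=
  ∀ j, j < i → σ j < σ i

/-- `i` is an antirecord (right-to-left minimum) of `σ`. -/
def IsAntirecord {n : ℕ} (σ : Equiv.Perm (Fin n)) (i : Fin n) : Prop :=
  ∀ j, i < j → σ i < σ j

def ujoinCt {n : ℕ} (σ : Equiv.Perm (Fin n)) : ℕ :=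
  (univ.filter fun p : Fin n × Fin n × Fin n =>
    p.1 < p.2.1 ∧ p.2.1 < p.2.2 ∧ p.2.1 = σ p.1 ∧ p.2.2 = σ p.2.1).card

def ljoinCt {n : ℕ} (σ : Equiv.Perm (Fin n)) : ℕ :=
  (univ.filter fun p : Fin n × Fin n × Fin n =>
    p.1 < p.2.1 ∧ p.2.1 < p.2.2 ∧ p.1 = σ p.2.1 ∧ p.2.1 = σ p.2.2).card

namespace InvAux

variable {n : ℕ}

lemma split_card {α} (s : Finset α) (P R : α → Prop) [DecidablePred P] [DecidablePred R] :
    (s.filter P).card = (s.filter fun x => P x ∧ R x).card + (s.filter fun x => P x ∧ ¬R x).card := by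
  rw [← Finset.filter_filter, ← Finset.filter_filter, Finset.card_filter_add_card_filter_not]

lemma card_filter_congr {α} {s : Finset α} {P Q : α → Prop} [DecidablePred P] [DecidablePred Q]
    (h : ∀ x ∈ s, P x ↔ Q x) : (s.filter P).card = (s.filter Q).card := by
  rw [Finset.filter_congr h]

lemma card_pair_snd (P : Fin n → Fin n → Prop) [∀ i j, Decidable (P i j)] :
    (univ.filter fun p : Fin n × Fin n => P p.1 p.2).card
      = ∑ j, (univ.filter fun i => P i j).card := by
  simp only [Finset.card_filter]
  rw [Fintype.sum_prod_type, Finset.sum_comm]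

lemma card_pair_fst (P : Fin n → Fin n → Prop) [∀ i j, Decidable (P i j)] :
    (univ.filter fun p : Fin n × Fin n => P p.1 p.2).card
      = ∑ i, (univ.filter fun j => P i j).card := by
  simp only [Finset.card_filter]
  rw [Fintype.sum_prod_type]

lemma card_lt (j : Fin n) : (univ.filter fun i : Fin n => i < j).card = (j : ℕ) := by
  have : (univ.filter fun i : Fin n => i < j) = Finset.Iio j := by
    ext i; simp
  rw [this, Fin.card_Iio]

lemma card_val_lt (σ : Equiv.Perm (Fin n)) (j : Fin n) :
    (univ.filter fun i : Fin n => σ i < j).card = (j : ℕ) := by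
  rw [← card_lt j]
  apply Finset.card_nbij' (fun i => σ i) (fun i => σ⁻¹ i) <;>
    simp [Finset.mem_filter, Set.MapsTo, Set.LeftInvOn, Set.RightInvOn]

lemma card_Ioc_pair (i m : Fin n) :
    (univ.filter fun p : Fin n => i < p ∧ p ≤ m).card = (m : ℕ) - (i : ℕ) := by
  have : (univ.filter fun p : Fin n => i < p ∧ p ≤ m) = Finset.Ioc i m := by
    ext p; simp [Finset.mem_Ioc]
  rw [this, Fin.card_Ioc]

lemma complement (σ : Equiv.Perm (Fin n)) (m : Fin n) :
    (univ.filter fun i : Fin n => i < m ∧ m ≤ σ i).card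
      = (univ.filter fun i : Fin n => m ≤ i ∧ σ i < m).card := by
  have h1 := split_card (univ : Finset (Fin n)) (fun i => i < m) (fun i => σ i < m)
  have h2 := split_card (univ : Finset (Fin n)) (fun i => σ i < m) (fun i => i < m)
  rw [card_lt] at h1
  rw [card_val_lt] at h2
  have e1 : (univ.filter fun i : Fin n => i < m ∧ ¬ σ i < m).card
      = (univ.filter fun i : Fin n => i < m ∧ m ≤ σ i).card :=
    card_filter_congr (fun i _ => by simp [not_lt])
  have e2 : (univ.filter fun i : Fin n => σ i < m ∧ ¬ i < m).card
      = (univ.filter fun i : Fin n => m ≤ i ∧ σ i < m).card :=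
    card_filter_congr (fun i _ => by simp [not_lt, and_comm])
  have e3 : (univ.filter fun i : Fin n => i < m ∧ σ i < m).card
      = (univ.filter fun i : Fin n => σ i < m ∧ i < m).card :=
    card_filter_congr (fun i _ => by simp [and_comm])
  omega

lemma sum_sub_comm (σ : Equiv.Perm (Fin n)) :
    ∑ j : Fin n, ((j : ℕ) - (σ j : ℕ)) = ∑ j : Fin n, ((σ j : ℕ) - (j : ℕ)) := by
  have h1 : ∀ j : Fin n, ((j:ℕ) - (σ j:ℕ)) + min (σ j:ℕ) (j:ℕ) = (j:ℕ) := fun j => by omega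
  have h2 : ∀ j : Fin n, ((σ j:ℕ) - (j:ℕ)) + min (σ j:ℕ) (j:ℕ) = (σ j:ℕ) := fun j => by omega
  have hs : ∑ j : Fin n, ((σ j : ℕ)) = ∑ j : Fin n, (j : ℕ) := Equiv.sum_comp σ _
  have e1 := Finset.sum_congr rfl (fun j (_ : j ∈ univ) => (h1 j).symm)
  have e2 := Finset.sum_congr rfl (fun j (_ : j ∈ univ) => (h2 j).symm)
  rw [Finset.sum_add_distrib] at e1 e2
  set a := ∑ j : Fin n, ((j : ℕ) - (σ j : ℕ)) with ha
  set b := ∑ j : Fin n, min (σ j:ℕ) (j:ℕ) with hb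
  set c := ∑ j : Fin n, ((σ j : ℕ) - (j : ℕ)) with hc
  set d := ∑ j : Fin n, (j:ℕ)
  omega

end InvAux
namespace InvAux

variable {n : ℕ} (σ : Equiv.Perm (Fin n))

lemma ucross_pairs :
    ucrossCt σ = (univ.filter fun q : Fin n × Fin n =>
      q.1 < q.2 ∧ q.2 < σ q.1 ∧ σ q.1 < σ q.2).card := by
  unfold ucrossCt
  apply Finset.card_nbij' (fun p => (p.1, p.2.1)) (fun q => (q.1, q.2, σ q.1, σ q.2)) <;>
    simp +contextual [Finset.mem_filter, Prod.ext_iff, Set.MapsTo, Set.LeftInvOn, Set.RightInvOn] <;> intros <;> subst_vars <;> simp_all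

lemma unest_pairs :
    unestCt σ = (univ.filter fun q : Fin n × Fin n =>
      q.1 < q.2 ∧ q.2 < σ q.2 ∧ σ q.2 < σ q.1).card := by
  unfold unestCt
  apply Finset.card_nbij' (fun p => (p.1, p.2.1)) (fun q => (q.1, q.2, σ q.2, σ q.1)) <;>
    simp +contextual [Finset.mem_filter, Prod.ext_iff, Set.MapsTo, Set.LeftInvOn, Set.RightInvOn] <;> intros <;> subst_vars <;> simp_all

lemma lcross_pairs :
    lcrossCt σ = (univ.filter fun q : Fin n × Fin n =>
      q.1 < q.2 ∧ σ q.1 < σ q.2 ∧ σ q.2 < q.1).card := by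
  unfold lcrossCt
  apply Finset.card_nbij' (fun p => (p.2.2.1, p.2.2.2)) (fun q => (σ q.1, σ q.2, q.1, q.2)) <;>
    simp +contextual [Finset.mem_filter, Prod.ext_iff, Set.MapsTo, Set.LeftInvOn, Set.RightInvOn] <;> intros <;> subst_vars <;> simp_all

lemma lnest_pairs :
    lnestCt σ = (univ.filter fun q : Fin n × Fin n =>
      q.1 < q.2 ∧ σ q.2 < σ q.1 ∧ σ q.1 < q.1).card := by
  unfold lnestCt
  apply Finset.card_nbij' (fun p => (p.2.2.1, p.2.2.2)) (fun q => (σ q.2, σ q.1, q.1, q.2)) <;>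
    simp +contextual [Finset.mem_filter, Prod.ext_iff, Set.MapsTo, Set.LeftInvOn, Set.RightInvOn] <;> intros <;> subst_vars <;> simp_all

lemma psnest_pairs :
    psnestCt σ = (univ.filter fun q : Fin n × Fin n =>
      q.1 < q.2 ∧ σ q.2 = q.2 ∧ q.2 < σ q.1).card := by
  unfold psnestCt
  apply Finset.card_nbij' (fun p => (p.1, p.2.1)) (fun q => (q.1, q.2, σ q.1)) <;>
    simp +contextual [Finset.mem_filter, Prod.ext_iff, Set.MapsTo, Set.LeftInvOn, Set.RightInvOn] <;> intros <;> subst_vars <;> simp_all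

lemma cdrise_pairs :
    cdriseCt σ = (univ.filter fun q : Fin n × Fin n =>
      q.1 < q.2 ∧ q.2 = σ q.1 ∧ q.2 < σ q.2).card := by
  unfold cdriseCt
  apply Finset.card_nbij' (fun x => (σ⁻¹ x, x)) (fun q => q.2) <;>
    simp +contextual [Finset.mem_filter, Prod.ext_iff, Set.MapsTo, Set.LeftInvOn, Set.RightInvOn] <;> intros <;> subst_vars <;>
      simp_all [Equiv.Perm.inv_eq_iff_eq]

end InvAux
namespace InvAux

variable {n : ℕ} (σ : Equiv.Perm (Fin n))

lemma cpeak_eq_cval : cpeakCt σ = cvalCt σ := by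
  have key : (univ.filter fun i : Fin n => i < σ⁻¹ i).card
      = (univ.filter fun j : Fin n => σ j < j).card := by
    apply Finset.card_nbij' (fun i => σ⁻¹ i) (fun j => σ j) <;>
      simp +contextual [Finset.mem_filter, Set.MapsTo, Set.LeftInvOn, Set.RightInvOn]
  have h1 := split_card (univ : Finset (Fin n)) (fun i => σ i < i) (fun i => σ⁻¹ i < i)
  have h2 := split_card (univ : Finset (Fin n)) (fun i => i < σ⁻¹ i) (fun i => σ i < i)
  have e1 : (univ.filter fun i : Fin n => σ i < i ∧ ¬ σ⁻¹ i < i).card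
      = (univ.filter fun i : Fin n => i < σ⁻¹ i ∧ σ i < i).card := by
    apply card_filter_congr; intro i _
    constructor
    · rintro ⟨h, h2⟩
      refine ⟨lt_of_le_of_ne (not_lt.1 h2) ?_, h⟩
      intro he
      have h3 : σ i = i := by nth_rewrite 1 [he]; exact σ.apply_symm_apply i
      rw [h3] at h; exact absurd h (lt_irrefl i)
    · rintro ⟨h2, h⟩; exact ⟨h, not_lt.2 h2.le⟩
  have e2 : (univ.filter fun i : Fin n => i < σ⁻¹ i ∧ ¬ σ i < i).card
      = (univ.filter fun i : Fin n => i < σ⁻¹ i ∧ i < σ i).card := by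
    apply card_filter_congr; intro i _
    constructor
    · rintro ⟨h, h2⟩
      refine ⟨h, lt_of_le_of_ne (not_lt.1 h2) ?_⟩
      intro he
      have h3 : σ⁻¹ i = i := by nth_rewrite 1 [he]; exact σ.symm_apply_apply i
      rw [h3] at h; exact absurd h (lt_irrefl i)
    · rintro ⟨h, h2⟩; exact ⟨h, not_lt.2 h2.le⟩
  unfold cpeakCt cvalCt
  have c1 : (univ.filter fun i : Fin n => σ i < i ∧ σ⁻¹ i < i).card
      = (univ.filter fun i : Fin n => σ⁻¹ i < i ∧ σ i < i).card :=
    card_filter_congr (fun i _ => by simp [and_comm])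
  omega

lemma fiber1 (j : Fin n) :
    (univ.filter fun i : Fin n => i < j ∧ σ j < σ i ∧ σ j < j).card
      = ((j : ℕ) - (σ j : ℕ))
        + (univ.filter fun l : Fin n => j < l ∧ σ l < σ j ∧ σ j < j).card := by
  by_cases hσ : σ j < j
  · have d1 : (univ.filter fun i : Fin n => i < j ∧ σ j < σ i ∧ σ j < j).card
        = (univ.filter fun i : Fin n => i < j ∧ σ j < σ i).card :=
      card_filter_congr (fun i _ => by simp [hσ])
    have d2 : (univ.filter fun l : Fin n => j < l ∧ σ l < σ j ∧ σ j < j).card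
        = (univ.filter fun l : Fin n => j < l ∧ σ l < σ j).card :=
      card_filter_congr (fun l _ => by simp [hσ, and_comm])
    have hxy := split_card (univ : Finset (Fin n)) (fun i => i < j) (fun i => σ j < σ i)
    rw [card_lt] at hxy
    have exy : (univ.filter fun i : Fin n => i < j ∧ ¬ σ j < σ i).card
        = (univ.filter fun i : Fin n => i < j ∧ σ i < σ j).card := by
      apply card_filter_congr; intro i _
      constructor
      · rintro ⟨h, h2⟩
        refine ⟨h, lt_of_le_of_ne (not_lt.1 h2) ?_⟩
        intro he; exact absurd (σ.injective he) h.ne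
      · rintro ⟨h, h2⟩; exact ⟨h, not_lt.2 h2.le⟩
    have hyz := split_card (univ : Finset (Fin n)) (fun i => σ i < σ j) (fun i => i < j)
    rw [card_val_lt] at hyz
    have eyz : (univ.filter fun i : Fin n => σ i < σ j ∧ ¬ i < j).card
        = (univ.filter fun l : Fin n => j < l ∧ σ l < σ j).card := by
      apply card_filter_congr; intro i _
      constructor
      · rintro ⟨h, h2⟩
        refine ⟨lt_of_le_of_ne (not_lt.1 h2) ?_, h⟩
        intro he; rw [← he] at h; exact absurd rfl h.ne
      · rintro ⟨h, h2⟩; exact ⟨h2, not_lt.2 h.le⟩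
    have eyz2 : (univ.filter fun i : Fin n => σ i < σ j ∧ i < j).card
        = (univ.filter fun i : Fin n => i < j ∧ σ i < σ j).card :=
      card_filter_congr (fun i _ => by simp [and_comm])
    have hv : (σ j : ℕ) < (j : ℕ) := hσ
    omega
  · have d1 : (univ.filter fun i : Fin n => i < j ∧ σ j < σ i ∧ σ j < j) = ∅ := by
      apply Finset.filter_false_of_mem; intro i _; simp [hσ]
    have d2 : (univ.filter fun l : Fin n => j < l ∧ σ l < σ j ∧ σ j < j) = ∅ := by
      apply Finset.filter_false_of_mem; intro l _; simp [hσ]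
    rw [d1, d2]
    have : (j : ℕ) ≤ (σ j : ℕ) := not_lt.1 hσ
    simp; omega

lemma fiber2 (p : Fin n) :
    (univ.filter fun i : Fin n => i < p ∧ p ≤ σ i ∧ σ p < p).card
      = (if σ p < p then 1 else 0)
        + (univ.filter fun i : Fin n => p < i ∧ σ i < p ∧ σ p < p).card := by
  by_cases hσ : σ p < p
  · have d1 : (univ.filter fun i : Fin n => i < p ∧ p ≤ σ i ∧ σ p < p).card
        = (univ.filter fun i : Fin n => i < p ∧ p ≤ σ i).card :=
      card_filter_congr (fun i _ => by simp [hσ])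
    have d2 : (univ.filter fun i : Fin n => p < i ∧ σ i < p ∧ σ p < p).card
        = (univ.filter fun i : Fin n => p ≤ i ∧ σ i < p ∧ ¬ (¬ p < i)).card := by
      apply card_filter_congr; intro i _
      constructor
      · rintro ⟨h, h2, _⟩; exact ⟨h.le, h2, by simpa using h⟩
      · rintro ⟨_, h2, h3⟩; exact ⟨by simpa using h3, h2, hσ⟩
    have hsplit := split_card (univ : Finset (Fin n))
      (fun i => p ≤ i ∧ σ i < p) (fun i => ¬ p < i)
    have done1 : (univ.filter fun i : Fin n => (p ≤ i ∧ σ i < p) ∧ ¬ p < i).card = 1 := by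
      have : (univ.filter fun i : Fin n => (p ≤ i ∧ σ i < p) ∧ ¬ p < i)
          = {p} := by
        ext i
        simp only [Finset.mem_filter, Finset.mem_univ, true_and, Finset.mem_singleton, not_lt]
        constructor
        · rintro ⟨⟨h1, _⟩, h3⟩; exact le_antisymm h3 h1
        · rintro rfl; exact ⟨⟨le_refl _, hσ⟩, le_refl _⟩
      rw [this, Finset.card_singleton]
    have done2 : (univ.filter fun i : Fin n => (p ≤ i ∧ σ i < p) ∧ ¬ ¬ p < i).card
        = (univ.filter fun i : Fin n => p ≤ i ∧ σ i < p ∧ ¬ ¬ p < i).card :=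
      card_filter_congr (fun i _ => by tauto)
    have hc := complement σ p
    rw [if_pos hσ, d1, d2, hc]
    omega
  · have d1 : (univ.filter fun i : Fin n => i < p ∧ p ≤ σ i ∧ σ p < p) = ∅ := by
      apply Finset.filter_false_of_mem; intro i _; simp [hσ]
    have d2 : (univ.filter fun i : Fin n => p < i ∧ σ i < p ∧ σ p < p) = ∅ := by
      apply Finset.filter_false_of_mem; intro i _; simp [hσ]
    rw [d1, d2, if_neg hσ]
    simp

end InvAux
theorem inv_formula {n : ℕ} (σ : Equiv.Perm (Fin n)) :
    invCt σ = cvalCt σ + cdriseCt σ + cdfallCt σ + ucrossCt σ + lcrossCt σ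
      + 2 * (unestCt σ + lnestCt σ + psnestCt σ) := by
  open InvAux in
  have hinv : invCt σ
      = (univ.filter fun q : Fin n × Fin n => q.1 < q.2 ∧ σ q.2 < σ q.1).card := rfl
  -- Step 1 : split inversions by trichotomy on σ q.2 vs q.2
  have s1 := InvAux.split_card (univ : Finset (Fin n × Fin n))
      (fun q => q.1 < q.2 ∧ σ q.2 < σ q.1) (fun q => q.2 < σ q.2)
  have e11 : (univ.filter fun q : Fin n × Fin n =>
        (q.1 < q.2 ∧ σ q.2 < σ q.1) ∧ q.2 < σ q.2).card
      = (univ.filter fun q : Fin n × Fin n =>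
        q.1 < q.2 ∧ q.2 < σ q.2 ∧ σ q.2 < σ q.1).card :=
    InvAux.card_filter_congr (fun q _ => by tauto)
  have s2 := InvAux.split_card (univ : Finset (Fin n × Fin n))
      (fun q => (q.1 < q.2 ∧ σ q.2 < σ q.1) ∧ ¬ q.2 < σ q.2) (fun q => σ q.2 = q.2)
  have e12 : (univ.filter fun q : Fin n × Fin n =>
        ((q.1 < q.2 ∧ σ q.2 < σ q.1) ∧ ¬ q.2 < σ q.2) ∧ σ q.2 = q.2).card
      = (univ.filter fun q : Fin n × Fin n =>
        q.1 < q.2 ∧ σ q.2 = q.2 ∧ q.2 < σ q.1).card := by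
    apply InvAux.card_filter_congr; intro q _
    constructor
    · rintro ⟨⟨⟨h1, h2⟩, _⟩, h4⟩; exact ⟨h1, h4, by rwa [h4] at h2⟩
    · rintro ⟨h1, h2, h3⟩; exact ⟨⟨⟨h1, by rwa [h2]⟩, by simp [h2]⟩, h2⟩
  have e13 : (univ.filter fun q : Fin n × Fin n =>
        ((q.1 < q.2 ∧ σ q.2 < σ q.1) ∧ ¬ q.2 < σ q.2) ∧ ¬ σ q.2 = q.2).card
      = (univ.filter fun q : Fin n × Fin n =>
        q.1 < q.2 ∧ σ q.2 < σ q.1 ∧ σ q.2 < q.2).card := by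
    apply InvAux.card_filter_congr; intro q _
    constructor
    · rintro ⟨⟨⟨h1, h2⟩, h3⟩, h4⟩
      exact ⟨h1, h2, lt_of_le_of_ne (not_lt.1 h3) h4⟩
    · rintro ⟨h1, h2, h3⟩; exact ⟨⟨⟨h1, h2⟩, not_lt.2 h3.le⟩, h3.ne⟩
  -- Step 2 : the third piece, fiberwise
  have a3 : (univ.filter fun q : Fin n × Fin n =>
        q.1 < q.2 ∧ σ q.2 < σ q.1 ∧ σ q.2 < q.2).card
      = ∑ j, (univ.filter fun i : Fin n => i < j ∧ σ j < σ i ∧ σ j < j).card :=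
    InvAux.card_pair_snd (fun i j => i < j ∧ σ j < σ i ∧ σ j < j)
  have a3' : ∑ j, (univ.filter fun i : Fin n => i < j ∧ σ j < σ i ∧ σ j < j).card
      = ∑ j : Fin n, (((j : ℕ) - (σ j : ℕ))
          + (univ.filter fun l : Fin n => j < l ∧ σ l < σ j ∧ σ j < j).card) :=
    Finset.sum_congr rfl (fun j _ => InvAux.fiber1 σ j)
  rw [Finset.sum_add_distrib] at a3'
  have hlnf : ∑ j, (univ.filter fun l : Fin n => j < l ∧ σ l < σ j ∧ σ j < j).card
      = (univ.filter fun q : Fin n × Fin n =>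
          q.1 < q.2 ∧ σ q.2 < σ q.1 ∧ σ q.1 < q.1).card :=
    (InvAux.card_pair_fst (fun j l => j < l ∧ σ l < σ j ∧ σ j < j)).symm
  -- Step 3 : the displacement sum D
  have hD : ∑ j : Fin n, ((j : ℕ) - (σ j : ℕ)) = ∑ i : Fin n, ((σ i : ℕ) - (i : ℕ)) :=
    InvAux.sum_sub_comm σ
  have hD2 : ∑ i : Fin n, ((σ i : ℕ) - (i : ℕ))
      = ∑ i, (univ.filter fun p : Fin n => i < p ∧ p ≤ σ i).card :=
    Finset.sum_congr rfl (fun i _ => (InvAux.card_Ioc_pair i (σ i)).symm)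
  have hE : ∑ i, (univ.filter fun p : Fin n => i < p ∧ p ≤ σ i).card
      = (univ.filter fun q : Fin n × Fin n => q.1 < q.2 ∧ q.2 ≤ σ q.1).card :=
    (InvAux.card_pair_fst (fun i p => i < p ∧ p ≤ σ i)).symm
  -- Step 4 : split E
  have s3 := InvAux.split_card (univ : Finset (Fin n × Fin n))
      (fun q => q.1 < q.2 ∧ q.2 ≤ σ q.1) (fun q => q.2 < σ q.2)
  have s4 := InvAux.split_card (univ : Finset (Fin n × Fin n))
      (fun q => (q.1 < q.2 ∧ q.2 ≤ σ q.1) ∧ q.2 < σ q.2) (fun q => q.2 = σ q.1)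
  have e41 : (univ.filter fun q : Fin n × Fin n =>
        ((q.1 < q.2 ∧ q.2 ≤ σ q.1) ∧ q.2 < σ q.2) ∧ q.2 = σ q.1).card
      = (univ.filter fun q : Fin n × Fin n =>
        q.1 < q.2 ∧ q.2 = σ q.1 ∧ q.2 < σ q.2).card := by
    apply InvAux.card_filter_congr; intro q _
    constructor
    · rintro ⟨⟨⟨h1, _⟩, h3⟩, h4⟩; exact ⟨h1, h4, h3⟩
    · rintro ⟨h1, h2, h3⟩; exact ⟨⟨⟨h1, le_of_eq h2⟩, h3⟩, h2⟩
  have e42 : (univ.filter fun q : Fin n × Fin n =>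
        ((q.1 < q.2 ∧ q.2 ≤ σ q.1) ∧ q.2 < σ q.2) ∧ ¬ q.2 = σ q.1).card
      = (univ.filter fun q : Fin n × Fin n =>
        q.1 < q.2 ∧ q.2 < σ q.1 ∧ q.2 < σ q.2).card := by
    apply InvAux.card_filter_congr; intro q _
    constructor
    · rintro ⟨⟨⟨h1, h2⟩, h3⟩, h4⟩; exact ⟨h1, lt_of_le_of_ne h2 h4, h3⟩
    · rintro ⟨h1, h2, h3⟩; exact ⟨⟨⟨h1, h2.le⟩, h3⟩, h2.ne⟩
  have s5 := InvAux.split_card (univ : Finset (Fin n × Fin n))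
      (fun q => q.1 < q.2 ∧ q.2 < σ q.1 ∧ q.2 < σ q.2) (fun q => σ q.1 < σ q.2)
  have e51 : (univ.filter fun q : Fin n × Fin n =>
        (q.1 < q.2 ∧ q.2 < σ q.1 ∧ q.2 < σ q.2) ∧ σ q.1 < σ q.2).card
      = (univ.filter fun q : Fin n × Fin n =>
        q.1 < q.2 ∧ q.2 < σ q.1 ∧ σ q.1 < σ q.2).card := by
    apply InvAux.card_filter_congr; intro q _
    constructor
    · rintro ⟨⟨h1, h2, _⟩, h4⟩; exact ⟨h1, h2, h4⟩
    · rintro ⟨h1, h2, h3⟩; exact ⟨⟨h1, h2, h2.trans h3⟩, h3⟩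
  have e52 : (univ.filter fun q : Fin n × Fin n =>
        (q.1 < q.2 ∧ q.2 < σ q.1 ∧ q.2 < σ q.2) ∧ ¬ σ q.1 < σ q.2).card
      = (univ.filter fun q : Fin n × Fin n =>
        q.1 < q.2 ∧ q.2 < σ q.2 ∧ σ q.2 < σ q.1).card := by
    apply InvAux.card_filter_congr; intro q _
    constructor
    · rintro ⟨⟨h1, _, h3⟩, h4⟩
      refine ⟨h1, h3, lt_of_le_of_ne (not_lt.1 h4) ?_⟩
      intro he; exact absurd (σ.injective he) h1.ne'
    · rintro ⟨h1, h2, h3⟩; exact ⟨⟨h1, h2.trans h3, h2⟩, not_lt.2 h3.le⟩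
  have s6 := InvAux.split_card (univ : Finset (Fin n × Fin n))
      (fun q => (q.1 < q.2 ∧ q.2 ≤ σ q.1) ∧ ¬ q.2 < σ q.2) (fun q => σ q.2 = q.2)
  have e61 : (univ.filter fun q : Fin n × Fin n =>
        ((q.1 < q.2 ∧ q.2 ≤ σ q.1) ∧ ¬ q.2 < σ q.2) ∧ σ q.2 = q.2).card
      = (univ.filter fun q : Fin n × Fin n =>
        q.1 < q.2 ∧ σ q.2 = q.2 ∧ q.2 < σ q.1).card := by
    apply InvAux.card_filter_congr; intro q _
    constructor
    · rintro ⟨⟨⟨h1, h2⟩, _⟩, h4⟩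
      refine ⟨h1, h4, lt_of_le_of_ne h2 ?_⟩
      intro he
      exact absurd (σ.injective (h4.trans he)) h1.ne'
    · rintro ⟨h1, h2, h3⟩; exact ⟨⟨⟨h1, h3.le⟩, by simp [h2]⟩, h2⟩
  have e62 : (univ.filter fun q : Fin n × Fin n =>
        ((q.1 < q.2 ∧ q.2 ≤ σ q.1) ∧ ¬ q.2 < σ q.2) ∧ ¬ σ q.2 = q.2).card
      = (univ.filter fun q : Fin n × Fin n =>
        q.1 < q.2 ∧ q.2 ≤ σ q.1 ∧ σ q.2 < q.2).card := by
    apply InvAux.card_filter_congr; intro q _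
    constructor
    · rintro ⟨⟨⟨h1, h2⟩, h3⟩, h4⟩
      exact ⟨h1, h2, lt_of_le_of_ne (not_lt.1 h3) h4⟩
    · rintro ⟨h1, h2, h3⟩; exact ⟨⟨⟨h1, h2⟩, not_lt.2 h3.le⟩, h3.ne⟩
  -- Step 5 : the mixed piece Em, fiberwise
  have em1 : (univ.filter fun q : Fin n × Fin n =>
        q.1 < q.2 ∧ q.2 ≤ σ q.1 ∧ σ q.2 < q.2).card
      = ∑ p, (univ.filter fun i : Fin n => i < p ∧ p ≤ σ i ∧ σ p < p).card :=
    InvAux.card_pair_snd (fun i p => i < p ∧ p ≤ σ i ∧ σ p < p)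
  have em2 : ∑ p, (univ.filter fun i : Fin n => i < p ∧ p ≤ σ i ∧ σ p < p).card
      = ∑ p : Fin n, ((if σ p < p then 1 else 0)
          + (univ.filter fun i : Fin n => p < i ∧ σ i < p ∧ σ p < p).card) :=
    Finset.sum_congr rfl (fun p _ => InvAux.fiber2 σ p)
  rw [Finset.sum_add_distrib] at em2
  have em3 : ∑ p : Fin n, (if σ p < p then 1 else 0)
      = (univ.filter fun p : Fin n => σ p < p).card := (Finset.card_filter _ _).symm
  have em4 : ∑ p, (univ.filter fun i : Fin n => p < i ∧ σ i < p ∧ σ p < p).card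
      = (univ.filter fun q : Fin n × Fin n =>
          q.1 < q.2 ∧ σ q.2 < q.1 ∧ σ q.1 < q.1).card :=
    (InvAux.card_pair_fst (fun p i => p < i ∧ σ i < p ∧ σ p < p)).symm
  -- Step 6 : anti-excedances = cpeak + cdfall
  have s7 := InvAux.split_card (univ : Finset (Fin n))
      (fun x => σ x < x) (fun x => σ⁻¹ x < x)
  have e71 : (univ.filter fun x : Fin n => σ x < x ∧ σ⁻¹ x < x).card
      = (univ.filter fun x : Fin n => σ⁻¹ x < x ∧ σ x < x).card :=
    InvAux.card_filter_congr (fun x _ => by tauto)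
  have e72 : (univ.filter fun x : Fin n => σ x < x ∧ ¬ σ⁻¹ x < x).card
      = (univ.filter fun x : Fin n => x < σ⁻¹ x ∧ σ x < x).card := by
    apply InvAux.card_filter_congr; intro x _
    constructor
    · rintro ⟨h1, h2⟩
      refine ⟨lt_of_le_of_ne (not_lt.1 h2) ?_, h1⟩
      intro he
      have : σ x = x := by nth_rewrite 1 [he]; exact σ.apply_symm_apply x
      rw [this] at h1; exact absurd h1 (lt_irrefl x)
    · rintro ⟨h1, h2⟩; exact ⟨h2, not_lt.2 h1.le⟩
  -- Step 7 : split F into lcross and lnest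
  have s8 := InvAux.split_card (univ : Finset (Fin n × Fin n))
      (fun q => q.1 < q.2 ∧ σ q.2 < q.1 ∧ σ q.1 < q.1) (fun q => σ q.1 < σ q.2)
  have e81 : (univ.filter fun q : Fin n × Fin n =>
        (q.1 < q.2 ∧ σ q.2 < q.1 ∧ σ q.1 < q.1) ∧ σ q.1 < σ q.2).card
      = (univ.filter fun q : Fin n × Fin n =>
        q.1 < q.2 ∧ σ q.1 < σ q.2 ∧ σ q.2 < q.1).card := by
    apply InvAux.card_filter_congr; intro q _
    constructor
    · rintro ⟨⟨h1, h2, _⟩, h4⟩; exact ⟨h1, h4, h2⟩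
    · rintro ⟨h1, h2, h3⟩; exact ⟨⟨h1, h3, h2.trans h3⟩, h2⟩
  have e82 : (univ.filter fun q : Fin n × Fin n =>
        (q.1 < q.2 ∧ σ q.2 < q.1 ∧ σ q.1 < q.1) ∧ ¬ σ q.1 < σ q.2).card
      = (univ.filter fun q : Fin n × Fin n =>
        q.1 < q.2 ∧ σ q.2 < σ q.1 ∧ σ q.1 < q.1).card := by
    apply InvAux.card_filter_congr; intro q _
    constructor
    · rintro ⟨⟨h1, _, h3⟩, h4⟩
      refine ⟨h1, lt_of_le_of_ne (not_lt.1 h4) ?_, h3⟩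
      intro he; exact absurd (σ.injective he) h1.ne'
    · rintro ⟨h1, h2, h3⟩; exact ⟨⟨h1, h2.trans h3, h3⟩, not_lt.2 h2.le⟩
  -- Conclusion
  rw [hinv, InvAux.ucross_pairs, InvAux.unest_pairs, InvAux.lcross_pairs,
    InvAux.lnest_pairs, InvAux.psnest_pairs, InvAux.cdrise_pairs,
    ← InvAux.cpeak_eq_cval]
  unfold cpeakCt cdfallCt
  omega
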